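/- Let (ℝ^{d+2}, q̃) be a quadratic space of signature (d+1, 1) and let u_1,…,u_n, u_∞ be vectors with q̃(u_i) = −m_i² < 0 for 1 ≤ i ≤ n and q̃(u_∞) = 0. Suppose all masses m_i are nonzero and every subfamily of {u_i : i ∈ I} with I ⊂ {1,…,n,∞} of cardinality at most d+1 is linearly independent. Then for every such I intersecting {1,…,n}, the Gram determinant det(⟨u_i, u_j⟩)_{i,j ∈ I} is nonzero. -/

import Mathlib

/-- The standard Lorentzian quadratic form of signature `(d+1, 1)` on `ℝ^{d+2}`. -/
noncomputable def lorentzQ (d : ℕ) (x : Fin (d + 2) → ℝ) : ℝ :=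
  (∑ i, x i ^ 2) - 2 * x (Fin.last (d + 1)) ^ 2

/-- Its polar bilinear form `⟨u,v⟩ = q̃(u+v) − q̃(u) − q̃(v)`. -/
noncomputable def lorentzPol (d : ℕ) (x y : Fin (d + 2) → ℝ) : ℝ :=
  lorentzQ d (x + y) - lorentzQ d x - lorentzQ d y

lemma lorentzPol_formula (d : ℕ) (x y : Fin (d + 2) → ℝ) :
    lorentzPol d x y = (∑ i, 2 * x i * y i) - 4 * x (Fin.last (d + 1)) * y (Fin.last (d + 1)) := by
  simp only [lorentzPol, lorentzQ, Pi.add_apply]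
  rw [show (∑ i, (x i + y i) ^ 2) = ∑ i, (x i ^ 2 + y i ^ 2 + 2 * x i * y i) from
    Finset.sum_congr rfl fun i _ => by ring]
  rw [Finset.sum_add_distrib, Finset.sum_add_distrib]
  ring

lemma lorentzPol_comm (d : ℕ) (x y : Fin (d + 2) → ℝ) :
    lorentzPol d x y = lorentzPol d y x := by
  simp only [lorentzPol, add_comm]; ring_nf

lemma lorentzPol_self (d : ℕ) (x : Fin (d + 2) → ℝ) :
    lorentzPol d x x = 2 * lorentzQ d x := by
  simp only [lorentzPol_formula, lorentzQ]
  rw [show (∑ i, 2 * x i * x i) = ∑ i, 2 * x i ^ 2 from Finset.sum_congr rfl fun i _ => by ring,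
    ← Finset.mul_sum]
  ring

lemma lorentzPol_sum_left (d : ℕ) {ι : Type*} (t : Finset ι) (c : ι → ℝ)
    (f : ι → Fin (d + 2) → ℝ) (y : Fin (d + 2) → ℝ) :
    lorentzPol d (∑ j ∈ t, c j • f j) y = ∑ j ∈ t, c j * lorentzPol d (f j) y := by
  simp only [lorentzPol_formula, Finset.sum_apply, Pi.smul_apply, smul_eq_mul,
    Finset.sum_mul, Finset.mul_sum, mul_sub, Finset.sum_sub_distrib]
  congr 1
  · rw [Finset.sum_comm]
    exact Finset.sum_congr rfl fun i _ => Finset.sum_congr rfl fun j _ => by ring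
  · exact Finset.sum_congr rfl fun j _ => by ring

lemma lorentz_key (d : ℕ) (x w : Fin (d + 2) → ℝ)
    (hw : lorentzQ d w < 0) (hx : lorentzQ d x = 0) (hxw : lorentzPol d x w = 0) :
    x = 0 := by
  set L := Fin.last (d + 1) with hL
  have hq : ∀ z : Fin (d + 2) → ℝ,
      lorentzQ d z = (∑ i : Fin (d + 1), z i.castSucc ^ 2) - z L ^ 2 := by
    intro z
    simp only [lorentzQ, Fin.sum_univ_castSucc]
    rw [hL]
    ring_nf
  have hp : lorentzPol d x w =
      2 * (∑ i : Fin (d + 1), x i.castSucc * w i.castSucc) - 2 * x L * w L := by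
    rw [lorentzPol_formula, Fin.sum_univ_castSucc, Finset.mul_sum]
    rw [show (∑ i : Fin (d+1), 2 * (x i.castSucc * w i.castSucc))
        = ∑ i : Fin (d+1), 2 * x i.castSucc * w i.castSucc from
      Finset.sum_congr rfl fun i _ => by ring]
    ring
  set A := ∑ i : Fin (d + 1), x i.castSucc ^ 2 with hA
  set B := ∑ i : Fin (d + 1), w i.castSucc ^ 2 with hB
  set a := ∑ i : Fin (d + 1), x i.castSucc * w i.castSucc with ha
  have hxA : A = x L ^ 2 := by have := hq x; rw [hx] at this; linarith
  have hwB : B < w L ^ 2 := by have := hq w; rw [this] at hw; linarith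
  have haa : a = x L * w L := by rw [hp] at hxw; linarith
  have hcs : a ^ 2 ≤ A * B := Finset.sum_mul_sq_le_sq_mul_sq Finset.univ _ _
  have hxL : x L = 0 := by
    by_contra h
    have h2 : (0:ℝ) < x L ^ 2 := by positivity
    rw [haa, hxA] at hcs
    nlinarith [mul_lt_mul_of_pos_left hwB h2]
  have hA0 : A = 0 := by rw [hxA, hxL]; ring
  have hall : ∀ i ∈ (Finset.univ : Finset (Fin (d+1))), x i.castSucc ^ 2 = 0 := by
    rw [← Finset.sum_eq_zero_iff_of_nonneg (fun i _ => sq_nonneg _)]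
    exact hA0
  funext j
  refine Fin.lastCases ?_ ?_ j
  · exact hxL
  · intro i
    have := hall i (Finset.mem_univ i)
    exact pow_eq_zero_iff (by norm_num) |>.mp this

/-- In a Lorentzian space `(ℝ^{d+2}, q̃)` of signature `(d+1,1)`, let
`u_1,…,u_n, u_∞` be vectors with `q̃(u_i) = −m_i² < 0` (all `m_i ≠ 0`) and
`q̃(u_∞) = 0`.  If every subfamily indexed by `I ⊆ {1,…,n,∞}` of cardinality
at most `d+1` is linearly independent, then for every such `I` meeting
`{1,…,n}` the Gram determinant `det(⟨u_i, u_j⟩)_{i,j ∈ I}` is nonzero.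
(The index `∞` is encoded by `none : Option (Fin n)`.) -/
theorem gram_determinant_ne_zero_of_linearIndependent
    (d n : ℕ) (u : Fin n → (Fin (d + 2) → ℝ)) (uinf : Fin (d + 2) → ℝ)
    (m : Fin n → ℝ) (hm : ∀ i, m i ≠ 0)
    (hqu : ∀ i, lorentzQ d (u i) = -(m i) ^ 2)
    (hqinf : lorentzQ d uinf = 0)
    (hindep : ∀ s : Finset (Option (Fin n)), s.card ≤ d + 1 →
      LinearIndependent ℝ (fun i : ↥s => (i : Option (Fin n)).elim uinf u)) :
    ∀ s : Finset (Option (Fin n)), s.card ≤ d + 1 → (∃ i ∈ s, i ≠ none) →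
      Matrix.det (Matrix.of fun i j : ↥s =>
        lorentzPol d ((i : Option (Fin n)).elim uinf u)
          ((j : Option (Fin n)).elim uinf u)) ≠ 0 := by
  intro s hcard hex hdet
  obtain ⟨i₀, hi₀s, hi₀⟩ := hex
  set w : Option (Fin n) → (Fin (d + 2) → ℝ) := fun i => i.elim uinf u with hw
  obtain ⟨c, hc0, hcv⟩ := Matrix.exists_mulVec_eq_zero_iff.mpr hdet
  set v : Fin (d + 2) → ℝ := ∑ j : ↥s, c j • w (j : Option (Fin n)) with hv
  have hv_orth : ∀ i : ↥s, lorentzPol d v (w (i : Option (Fin n))) = 0 := by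
    intro i
    have h1 := congrFun hcv i
    simp only [Matrix.mulVec, dotProduct, Matrix.of_apply, Pi.zero_apply] at h1
    rw [hv, lorentzPol_sum_left, ← h1]
    exact Finset.sum_congr rfl fun j _ => by rw [lorentzPol_comm]; ring
  have hvv : lorentzPol d v v = 0 := by
    conv_lhs => rw [hv, lorentzPol_sum_left]
    refine Finset.sum_eq_zero fun j _ => ?_
    rw [lorentzPol_comm, ← hv, hv_orth j, mul_zero]
  have hqv : lorentzQ d v = 0 := by
    have := lorentzPol_self d v; linarith [hvv]
  obtain ⟨k, rfl⟩ : ∃ k, i₀ = some k := by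
    cases i₀ with
    | none => exact absurd rfl hi₀
    | some k => exact ⟨k, rfl⟩
  have hneg : lorentzQ d (u k) < 0 := by
    rw [hqu k]
    have : (0:ℝ) < m k ^ 2 := pow_two_pos_of_ne_zero (hm k)
    linarith
  have hv0 : v = 0 := by
    refine lorentz_key d v (u k) hneg hqv ?_
    exact hv_orth ⟨some k, hi₀s⟩
  have hli := Fintype.linearIndependent_iff.mp (hindep s hcard) c (by
    rw [← hv0, hv])
  exact hc0 (funext fun j => hli j)
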